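/- For every n ∈ ℕ and all c₁, c₂ ∈ [0,1), the group Γ_{n,c₁,c₂} acts freely on ℝ³ (no nontrivial element has a fixed point), the action is properly discontinuous (for every compact subset K ⊆ ℝ³ only finitely many γ ∈ Γ_{n,c₁,c₂} satisfy γ(K) ∩ K ≠ ∅), and the quotient space ℝ³/Γ_{n,c₁,c₂} is compact. -/

import Mathlib

noncomputable section

/-- The bijection `(x,y,z) ↦ (x + φ(y,z), y + ψ(z), z + b)` of `ℝ³`. -/
def affMap (φ : ℝ × ℝ → ℝ) (ψ : ℝ → ℝ) (b : ℝ) : Equiv.Perm (ℝ × ℝ × ℝ) where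
  toFun p := (p.1 + φ p.2, p.2.1 + ψ p.2.2, p.2.2 + b)
  invFun p := (p.1 - φ (p.2.1 - ψ (p.2.2 - b), p.2.2 - b), p.2.1 - ψ (p.2.2 - b), p.2.2 - b)
  left_inv := by rintro ⟨x, y, z⟩; simp
  right_inv := by rintro ⟨x, y, z⟩; simp

/-- The group `Γ_{n,c₁,c₂}`, generated by `(x,y,z) ↦ (x+1,y,z)`,
`(x,y,z) ↦ (x+c₁,y+1,z)` and `(x,y,z) ↦ (x+ny+c₂,y,z+1)`. -/
def Gamma (n : ℕ) (c₁ c₂ : ℝ) : Subgroup (Equiv.Perm (ℝ × ℝ × ℝ)) :=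
  Subgroup.closure
    { affMap (fun _ => 1) (fun _ => 0) 0,
      affMap (fun _ => c₁) (fun _ => 1) 0,
      affMap (fun q => n * q.1 + c₂) (fun _ => 0) 1 }

def sgm (n : ℕ) (k l : ℤ) (t : ℝ) : Equiv.Perm (ℝ × ℝ × ℝ) :=
  affMap (fun q => (n : ℝ) * (k : ℝ) * q.1 + t) (fun _ => (l : ℝ)) (k : ℝ)

lemma sgm_apply (n : ℕ) (k l : ℤ) (t : ℝ) (p : ℝ × ℝ × ℝ) :
    sgm n k l t p = (p.1 + ((n : ℝ) * k * p.2.1 + t), p.2.1 + l, p.2.2 + k) := rfl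

lemma sgm_congr {n : ℕ} {k k' l l' : ℤ} {t t' : ℝ} (h1 : k = k') (h2 : l = l')
    (h3 : t = t') : sgm n k l t = sgm n k' l' t' := by subst h1; subst h2; subst h3; rfl

lemma sgm_mul (n : ℕ) (k l k' l' : ℤ) (t t' : ℝ) :
    sgm n k l t * sgm n k' l' t' = sgm n (k + k') (l + l') (t + t' + (n : ℝ) * k * l') := by
  apply Equiv.ext; rintro ⟨x, y, z⟩
  simp only [Equiv.Perm.mul_apply, sgm_apply, Prod.mk.injEq]
  refine ⟨by push_cast; ring, by push_cast; ring, by push_cast; ring⟩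

lemma sgm_one (n : ℕ) : sgm n 0 0 0 = 1 := by
  apply Equiv.ext; rintro ⟨x, y, z⟩
  simp [sgm_apply]

lemma sgm_inv (n : ℕ) (k l : ℤ) (t : ℝ) :
    (sgm n k l t)⁻¹ = sgm n (-k) (-l) ((n : ℝ) * k * l - t) := by
  rw [inv_eq_iff_mul_eq_one]
  apply Equiv.ext; rintro ⟨x, y, z⟩
  simp only [Equiv.Perm.mul_apply, sgm_apply, Equiv.Perm.one_apply, Prod.mk.injEq]
  refine ⟨by push_cast; ring, by push_cast; ring, by push_cast; ring⟩

lemma sgm_zpow (n : ℕ) (k l : ℤ) (t : ℝ) (h : k = 0 ∨ l = 0) (j : ℤ) :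
    sgm n k l t ^ j = sgm n (j * k) (j * l) ((j : ℝ) * t) := by
  have hcross : ∀ a b : ℤ, (n : ℝ) * (a * k : ℤ) * (b * l : ℤ) = 0 := by
    rcases h with h | h <;> intro a b <;> subst h <;> push_cast <;> ring
  induction j using Int.induction_on with
  | zero => simpa using (sgm_one n).symm
  | succ i ih =>
      rw [zpow_add_one, ih]
      have : sgm n k l t = sgm n (1 * k) (1 * l) ((1 : ℝ) * t) := sgm_congr (by ring) (by ring) (by ring)
      rw [this, sgm_mul]
      have h2 : (n : ℝ) * k * l = 0 := by have := hcross 1 1; push_cast at this; simpa using this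
      exact sgm_congr (by ring) (by ring) (by push_cast; linear_combination (i : ℝ) * h2)
  | pred i ih =>
      rw [zpow_sub_one, ih, sgm_inv, sgm_mul]
      have h2 : (n : ℝ) * k * l = 0 := by have := hcross 1 1; push_cast at this; simpa using this
      exact sgm_congr (by ring) (by ring) (by push_cast; linear_combination (1 + (i : ℝ)) * h2)

lemma gen_a_eq (n : ℕ) : affMap (fun _ => (1:ℝ)) (fun _ => 0) 0 = sgm n 0 0 1 := by
  apply Equiv.ext; rintro ⟨x, y, z⟩
  simp [sgm_apply, affMap]

lemma gen_b_eq (n : ℕ) (c₁ : ℝ) : affMap (fun _ => c₁) (fun _ => (1:ℝ)) 0 = sgm n 0 1 c₁ := by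
  apply Equiv.ext; rintro ⟨x, y, z⟩
  simp [sgm_apply, affMap]

lemma gen_c_eq (n : ℕ) (c₂ : ℝ) :
    affMap (fun q => (n : ℝ) * q.1 + c₂) (fun _ => (0:ℝ)) 1 = sgm n 1 0 c₂ := by
  apply Equiv.ext; rintro ⟨x, y, z⟩
  simp [sgm_apply, affMap]

def bigH (n : ℕ) (c₁ c₂ : ℝ) : Subgroup (Equiv.Perm (ℝ × ℝ × ℝ)) where
  carrier := {γ | ∃ k l m : ℤ, γ = sgm n k l (m + l * c₁ + k * c₂)}
  one_mem' := ⟨0, 0, 0, by rw [← sgm_one n]; exact sgm_congr rfl rfl (by push_cast; ring)⟩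
  mul_mem' := by
    rintro γ δ ⟨k, l, m, rfl⟩ ⟨k', l', m', rfl⟩
    refine ⟨k + k', l + l', m + m' + n * k * l', ?_⟩
    rw [sgm_mul]
    exact sgm_congr rfl rfl (by push_cast; ring)
  inv_mem' := by
    rintro γ ⟨k, l, m, rfl⟩
    refine ⟨-k, -l, n * k * l - m, ?_⟩
    rw [sgm_inv]
    exact sgm_congr rfl rfl (by push_cast; ring)

lemma mem_bigH {n : ℕ} {c₁ c₂ : ℝ} {γ : Equiv.Perm (ℝ × ℝ × ℝ)} :
    γ ∈ bigH n c₁ c₂ ↔ ∃ k l m : ℤ, γ = sgm n k l (m + l * c₁ + k * c₂) := Iff.rfl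

lemma gamma_le (n : ℕ) (c₁ c₂ : ℝ) : Gamma n c₁ c₂ ≤ bigH n c₁ c₂ := by
  rw [Gamma, Subgroup.closure_le]
  rintro γ hγ
  simp only [Set.mem_insert_iff, Set.mem_singleton_iff] at hγ
  rcases hγ with rfl | rfl | rfl
  · exact ⟨0, 0, 1, by rw [gen_a_eq n]; exact sgm_congr rfl rfl (by push_cast; ring)⟩
  · exact ⟨0, 1, 0, by rw [gen_b_eq n c₁]; exact sgm_congr rfl rfl (by push_cast; ring)⟩
  · exact ⟨1, 0, 0, by rw [gen_c_eq n c₂]; exact sgm_congr rfl rfl (by push_cast; ring)⟩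

lemma abs_coords {R : ℝ} {p : ℝ × ℝ × ℝ} (hp : p ∈ Metric.closedBall (0 : ℝ × ℝ × ℝ) R) :
    |p.1| ≤ R ∧ |p.2.1| ≤ R ∧ |p.2.2| ≤ R := by
  simp only [Metric.mem_closedBall, Prod.dist_eq, Real.dist_eq, Prod.fst_zero, Prod.snd_zero,
    sub_zero, max_le_iff] at hp
  exact ⟨hp.1, hp.2.1, hp.2.2⟩

/-- `Γ_{n,c₁,c₂}` acts freely and properly discontinuously on `ℝ³`, with compact
quotient. -/
theorem stmt_19 (n : ℕ) (c₁ c₂ : ℝ)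
    (hc₁ : c₁ ∈ Set.Ico (0 : ℝ) 1) (hc₂ : c₂ ∈ Set.Ico (0 : ℝ) 1) :
    (∀ γ ∈ Gamma n c₁ c₂, γ ≠ 1 → ∀ p : ℝ × ℝ × ℝ, γ p ≠ p) ∧
    (∀ K : Set (ℝ × ℝ × ℝ), IsCompact K →
      {γ : Equiv.Perm (ℝ × ℝ × ℝ) | γ ∈ Gamma n c₁ c₂ ∧ (⇑γ '' K ∩ K).Nonempty}.Finite) ∧
    CompactSpace (Quot fun p q : ℝ × ℝ × ℝ => ∃ γ ∈ Gamma n c₁ c₂, γ p = q) := by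
  obtain ⟨hc₁0, hc₁1⟩ := hc₁
  obtain ⟨hc₂0, hc₂1⟩ := hc₂
  refine ⟨?_, ?_, ?_⟩
  · -- freeness
    intro γ hγ hne p hp
    obtain ⟨k, l, m, rfl⟩ := gamma_le n c₁ c₂ hγ
    have h3 := congrArg (fun q : ℝ × ℝ × ℝ => q.2.2) hp
    simp only [sgm_apply] at h3
    have hk : k = 0 := by exact_mod_cast (by linarith : (k : ℝ) = 0)
    have h2 := congrArg (fun q : ℝ × ℝ × ℝ => q.2.1) hp
    simp only [sgm_apply] at h2
    have hl : l = 0 := by exact_mod_cast (by linarith : (l : ℝ) = 0)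
    subst hk; subst hl
    have h1 := congrArg (fun q : ℝ × ℝ × ℝ => q.1) hp
    simp only [sgm_apply] at h1
    push_cast at h1
    have hm : m = 0 := by exact_mod_cast (by nlinarith [h1] : (m : ℝ) = 0)
    subst hm
    exact hne (by rw [← sgm_one n]; exact sgm_congr rfl rfl (by push_cast; ring))
  · -- proper discontinuity
    intro K hK
    obtain ⟨R₀, hR₀⟩ := hK.isBounded.subset_closedBall 0
    set R : ℝ := max R₀ 0 with hRdef
    have hRnn : (0 : ℝ) ≤ R := le_max_right _ _
    have hKb : K ⊆ Metric.closedBall 0 R :=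
      hR₀.trans (Metric.closedBall_subset_closedBall (le_max_left _ _))
    set B : ℝ := 2 * R + (n : ℝ) * (2 * R) * R + 2 * R * 1 + 2 * R * 1 + 2 * R with hBdef
    set N : ℤ := ⌈B⌉ with hNdef
    have hBnn : (0 : ℝ) ≤ B := by positivity
    have key : ∀ j : ℤ, |(j : ℝ)| ≤ B → -N ≤ j ∧ j ≤ N := by
      intro j hj
      rw [abs_le] at hj
      constructor
      · have : (-N : ℝ) ≤ (j : ℝ) := by
          have := Int.le_ceil B
          linarith [hj.1]
        exact_mod_cast this
      · have : (j : ℝ) ≤ (N : ℝ) := by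
          have := Int.le_ceil B
          linarith [hj.2]
        exact_mod_cast this
    have hfin : (Set.Icc ((-N, -N, -N) : ℤ × ℤ × ℤ) (N, N, N)).Finite := Set.finite_Icc _ _
    refine ((hfin.image
      (fun v : ℤ × ℤ × ℤ => sgm n v.1 v.2.1 ((v.2.2 : ℝ) + v.2.1 * c₁ + v.1 * c₂))).subset ?_)
    rintro γ ⟨hγ, q, ⟨p, hpK, rfl⟩, hqK⟩
    obtain ⟨k, l, m, rfl⟩ := gamma_le n c₁ c₂ hγ
    obtain ⟨hp1, hp2, hp3⟩ := abs_coords (hKb hpK)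
    obtain ⟨hq1, hq2, hq3⟩ := abs_coords (hKb hqK)
    simp only [sgm_apply] at hq1 hq2 hq3
    rw [abs_le] at hp1 hp2 hp3 hq1 hq2 hq3
    have hk : |(k : ℝ)| ≤ 2 * R := abs_le.mpr ⟨by linarith [hp3.1, hp3.2, hq3.1, hq3.2],
      by linarith [hp3.1, hp3.2, hq3.1, hq3.2]⟩
    have hl : |(l : ℝ)| ≤ 2 * R := abs_le.mpr ⟨by linarith [hp2.1, hp2.2, hq2.1, hq2.2],
      by linarith [hp2.1, hp2.2, hq2.1, hq2.2]⟩
    have hnk : |(n : ℝ) * k * p.2.1| ≤ (n : ℝ) * (2 * R) * R := by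
      rw [abs_mul, abs_mul, Nat.abs_cast]
      exact mul_le_mul (mul_le_mul_of_nonneg_left hk (by positivity))
        (abs_le.mpr ⟨hp2.1, hp2.2⟩) (abs_nonneg _) (by positivity)
    have hlc : |(l : ℝ) * c₁| ≤ 2 * R * 1 := by
      rw [abs_mul]
      exact mul_le_mul hl (abs_le.mpr ⟨by linarith, by linarith⟩) (abs_nonneg _) (by positivity)
    have hkc : |(k : ℝ) * c₂| ≤ 2 * R * 1 := by
      rw [abs_mul]
      exact mul_le_mul hk (abs_le.mpr ⟨by linarith, by linarith⟩) (abs_nonneg _) (by positivity)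
    rw [abs_le] at hk hl hnk hlc hkc
    have hm : |(m : ℝ)| ≤ B :=
      abs_le.mpr ⟨by simp only [hBdef]; linarith [hq1.1, hq1.2, hp1.1, hp1.2, hnk.1, hnk.2,
          hlc.1, hlc.2, hkc.1, hkc.2],
        by simp only [hBdef]; linarith [hq1.1, hq1.2, hp1.1, hp1.2, hnk.1, hnk.2,
          hlc.1, hlc.2, hkc.1, hkc.2]⟩
    have hkB : |(k : ℝ)| ≤ B := by rw [abs_le]; constructor <;> [skip; skip] <;>
      simp only [hBdef] <;> [linarith [hk.1]; linarith [hk.2]]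
    have hlB : |(l : ℝ)| ≤ B := by rw [abs_le]; constructor <;> [skip; skip] <;>
      simp only [hBdef] <;> [linarith [hl.1]; linarith [hl.2]]
    refine ⟨(k, l, m), ?_, rfl⟩
    simp only [Set.mem_Icc, Prod.mk_le_mk]
    exact ⟨⟨(key k hkB).1, (key l hlB).1, (key m hm).1⟩,
      ⟨(key k hkB).2, (key l hlB).2, (key m hm).2⟩⟩
  · -- compact quotient
    have ha : sgm n 0 0 1 ∈ Gamma n c₁ c₂ := by
      rw [← gen_a_eq n]; exact Subgroup.subset_closure (by simp)
    have hb : sgm n 0 1 c₁ ∈ Gamma n c₁ c₂ := by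
      rw [← gen_b_eq n c₁]; exact Subgroup.subset_closure (by simp)
    have hc : sgm n 1 0 c₂ ∈ Gamma n c₁ c₂ := by
      rw [← gen_c_eq n c₂]; exact Subgroup.subset_closure (by simp)
    have hA : ∀ m : ℤ, sgm n 0 0 (m : ℝ) ∈ Gamma n c₁ c₂ := by
      intro m
      have e : sgm n 0 0 1 ^ m = sgm n 0 0 (m : ℝ) := by
        rw [sgm_zpow n 0 0 1 (Or.inl rfl) m]
        exact sgm_congr (by ring) (by ring) (by ring)
      rw [← e]; exact zpow_mem ha m
    have hB : ∀ l : ℤ, sgm n 0 l ((l : ℝ) * c₁) ∈ Gamma n c₁ c₂ := by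
      intro l
      have e : sgm n 0 1 c₁ ^ l = sgm n 0 l ((l : ℝ) * c₁) := by
        rw [sgm_zpow n 0 1 c₁ (Or.inl rfl) l]
        exact sgm_congr (by ring) (by ring) (by ring)
      rw [← e]; exact zpow_mem hb l
    have hC : ∀ k : ℤ, sgm n k 0 ((k : ℝ) * c₂) ∈ Gamma n c₁ c₂ := by
      intro k
      have e : sgm n 1 0 c₂ ^ k = sgm n k 0 ((k : ℝ) * c₂) := by
        rw [sgm_zpow n 1 0 c₂ (Or.inr rfl) k]
        exact sgm_congr (by ring) (by ring) (by ring)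
      rw [← e]; exact zpow_mem hc k
    refine ⟨?_⟩
    have hicc : IsCompact (Set.Icc ((0 : ℝ), (0 : ℝ), (0 : ℝ)) (1, 1, 1)) := isCompact_Icc
    have himg := hicc.image
      (continuous_quot_mk (r := fun p q : ℝ × ℝ × ℝ => ∃ γ ∈ Gamma n c₁ c₂, γ p = q))
    have huniv : Set.univ = Quot.mk (fun p q : ℝ × ℝ × ℝ => ∃ γ ∈ Gamma n c₁ c₂, γ p = q) ''
        Set.Icc ((0 : ℝ), (0 : ℝ), (0 : ℝ)) (1, 1, 1) := by
      refine (Set.eq_univ_of_forall ?_).symm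
      intro qq
      obtain ⟨p, rfl⟩ := Quot.exists_rep qq
      obtain ⟨x, y, z⟩ := p
      set k : ℤ := -⌊z⌋ with hkdef
      set l : ℤ := -⌊y⌋ with hldef
      set W : ℝ := x + (n : ℝ) * k * y + l * c₁ + k * c₂ with hWdef
      set m : ℤ := -⌊W⌋ with hmdef
      set T : ℝ := (m : ℝ) + l * c₁ + k * c₂ with hTdef
      have hγ' : sgm n k l T ∈ Gamma n c₁ c₂ := by
        have e : sgm n 0 0 (m : ℝ) * sgm n 0 l ((l : ℝ) * c₁) * sgm n k 0 ((k : ℝ) * c₂)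
            = sgm n k l T := by
          rw [sgm_mul, sgm_mul]
          exact sgm_congr (by ring) (by ring) (by push_cast; ring)
        rw [← e]
        exact mul_mem (mul_mem (hA m) (hB l)) (hC k)
      refine ⟨sgm n k l T (x, y, z), ?_, Quot.sound ⟨(sgm n k l T)⁻¹, inv_mem hγ',
        Equiv.symm_apply_apply _ _⟩⟩
      rw [sgm_apply]
      simp only [Set.mem_Icc, Prod.mk_le_mk]
      have e1 : x + ((n : ℝ) * k * y + T) = Int.fract W := by
        rw [Int.fract, hWdef, hTdef, hmdef]
        push_cast
        ring
      have e2 : y + (l : ℝ) = Int.fract y := by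
        rw [Int.fract, hldef]; push_cast; ring
      have e3 : z + (k : ℝ) = Int.fract z := by
        rw [Int.fract, hkdef]; push_cast; ring
      rw [e1, e2, e3]
      exact ⟨⟨Int.fract_nonneg _, Int.fract_nonneg _, Int.fract_nonneg _⟩,
        ⟨(Int.fract_lt_one _).le, (Int.fract_lt_one _).le, (Int.fract_lt_one _).le⟩⟩
    rw [huniv]
    exact himg
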